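/- Define the four Jacobi theta functions on the upper half-plane via q = e^{2πiz}: θ₀₀(z) = ∑_{n∈ℤ} q^{n²/2}, θ_{½,0}(z) = ∑_{n∈ℤ+½} q^{n²/2}, θ_{0,½}(z) = ∑_{n∈ℤ} (−1)ⁿ q^{n²/2}, and θ'_{½,½}(z) = ∑_{n∈ℤ+½} (−1)^{n−½} n q^{n²/2}. Then θ'_{½,½}(z) = η(z)³, where η(z) = q^{1/24} ∏_{n≥1} (1 − qⁿ) is the Dedekind eta function; in particular θ'_{½,½}(z) ≠ 0 for all z ∈ ℍ. -/

import Mathlib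

open Finset Complex Filter Topology Real

namespace JDF

variable {R : Type*} [CommRing R]

/-- Gaussian binomial coefficient as a ring element. -/
def gb (Q : R) : ℕ → ℕ → R
  | 0, 0 => 1
  | 0, _ + 1 => 0
  | _ + 1, 0 => 1
  | m + 1, j + 1 => Q ^ (j + 1) * gb Q m (j + 1) + gb Q m j

@[simp] lemma gb_zero_right (Q : R) (m : ℕ) : gb Q m 0 = 1 := by
  cases m <;> rfl

lemma gb_succ_succ (Q : R) (m j : ℕ) :
    gb Q (m + 1) (j + 1) = Q ^ (j + 1) * gb Q m (j + 1) + gb Q m j := rfl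

lemma gb_eq_zero (Q : R) : ∀ m j, m < j → gb Q m j = 0 := by
  intro m
  induction m with
  | zero => intro j hj; match j, hj with | j + 1, _ => rfl
  | succ m ih =>
    intro j hj
    match j, hj with
    | j + 1, hj =>
      rw [gb_succ_succ, ih _ (by omega), ih _ (by omega), mul_zero, add_zero]

theorem qbinom (Q : R) : ∀ (m : ℕ) (x : R),
    ∏ k ∈ range m, (1 + x * Q ^ k)
      = ∑ j ∈ range (m + 1), gb Q m j * Q ^ j.choose 2 * x ^ j := by
  intro m
  induction m with
  | zero => intro x; simp [gb]
  | succ m ih =>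
    intro x
    have key : ∏ k ∈ range (m + 1), (1 + x * Q ^ k)
        = (1 + x) * ∏ k ∈ range m, (1 + (x * Q) * Q ^ k) := by
      rw [Finset.prod_range_succ' (fun k => 1 + x * Q ^ k) m]
      ring_nf
    rw [key, ih (x * Q)]
    -- abbreviate t j = gb Q m j * Q ^ (j.choose 2 + j) * x ^ j
    have hterm : ∀ j, gb Q m j * Q ^ j.choose 2 * (x * Q) ^ j
        = gb Q m j * Q ^ (j.choose 2 + j) * x ^ j := by
      intro j; rw [mul_pow, pow_add]; ring
    rw [Finset.sum_congr rfl fun j _ => hterm j]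
    -- RHS: split first term
    rw [Finset.sum_range_succ' (fun j => gb Q (m + 1) j * Q ^ j.choose 2 * x ^ j) (m + 1)]
    have hg0 : gb Q (m + 1) 0 * Q ^ Nat.choose 0 2 * x ^ 0 = 1 := by simp
    rw [hg0]
    have hsplit : ∀ j, gb Q (m + 1) (j + 1) * Q ^ (j + 1).choose 2 * x ^ (j + 1)
        = gb Q m (j + 1) * Q ^ ((j + 1).choose 2 + (j + 1)) * x ^ (j + 1)
          + gb Q m j * Q ^ (j.choose 2 + j) * (x ^ (j + 1)) := by
      intro j
      rw [gb_succ_succ]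
      have hc : (j + 1).choose 2 = j.choose 2 + j := by
        rw [Nat.choose_succ_succ]
        simp [Nat.choose_one_right, add_comm]
      rw [hc, pow_add]
      ring
    rw [Finset.sum_congr rfl fun j _ => hsplit j, Finset.sum_add_distrib]
    -- first partial sum equals  (∑_{j<m+1} t' j) - 1
    have hshift : ∑ j ∈ range (m + 1), gb Q m (j + 1) * Q ^ ((j + 1).choose 2 + (j + 1)) * x ^ (j + 1)
        = ∑ j ∈ range (m + 1), gb Q m j * Q ^ (j.choose 2 + j) * x ^ j - 1 := by
      rw [eq_sub_iff_add_eq]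
      have h := Finset.sum_range_succ' (fun j => gb Q m j * Q ^ (j.choose 2 + j) * x ^ j) (m + 1)
      have h0 : gb Q m 0 * Q ^ (Nat.choose 0 2 + 0) * x ^ 0 = 1 := by simp
      rw [h0] at h
      rw [← h, Finset.sum_range_succ]
      simp [gb_eq_zero Q m (m + 1) (by omega)]
    rw [hshift]
    have hmul : (1 + x) * ∑ j ∈ range (m + 1), gb Q m j * Q ^ (j.choose 2 + j) * x ^ j
        = ∑ j ∈ range (m + 1), gb Q m j * Q ^ (j.choose 2 + j) * x ^ j
          + ∑ j ∈ range (m + 1), gb Q m j * Q ^ (j.choose 2 + j) * x ^ (j + 1) := by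
      rw [add_mul, one_mul, Finset.mul_sum]
      congr 1
      apply Finset.sum_congr rfl
      intro j _
      ring
    rw [hmul]
    ring

/-- Closed form: `gb Q m j * ∏_{i<j} (1-Q^{i+1}) = ∏_{i<j} (1-Q^{m-i})`. -/
theorem gb_mul_eq (Q : R) : ∀ m j : ℕ,
    gb Q m j * ∏ i ∈ range j, (1 - Q ^ (i + 1)) = ∏ i ∈ range j, (1 - Q ^ (m - i)) := by
  intro m
  induction m with
  | zero =>
    intro j
    match j with
    | 0 => simp
    | j + 1 =>
      rw [gb_eq_zero Q 0 (j + 1) (by omega), zero_mul]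
      refine (Finset.prod_eq_zero (Finset.mem_range.2 (Nat.succ_pos j)) ?_).symm
      simp
  | succ m ih =>
    intro j
    match j with
    | 0 => simp
    | j + 1 =>
      rcases le_or_gt j m with hjm | hjm
      · have hN : ∏ i ∈ range (j + 1), (1 - Q ^ (m + 1 - i))
            = (1 - Q ^ (m + 1)) * ∏ i ∈ range j, (1 - Q ^ (m - i)) := by
          rw [Finset.prod_range_succ' (fun i => 1 - Q ^ (m + 1 - i)) j]
          rw [Nat.sub_zero, mul_comm]
          congr 1
          exact Finset.prod_congr rfl fun i _ => by rw [Nat.succ_sub_succ]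
        have h1 := ih (j + 1)
        rw [Finset.prod_range_succ, Finset.prod_range_succ] at h1
        have h2 := ih j
        have hpow : Q ^ (j + 1) * Q ^ (m - j) = Q ^ (m + 1) := by
          rw [← pow_add]; congr 1; omega
        rw [hN, gb_succ_succ, Finset.prod_range_succ]
        linear_combination Q ^ (j + 1) * h1 + (1 - Q ^ (j + 1)) * h2
          - (∏ i ∈ range j, (1 - Q ^ (m - i))) * hpow
      · rw [gb_eq_zero Q (m + 1) (j + 1) (by omega), zero_mul]
        refine (Finset.prod_eq_zero (Finset.mem_range.2 (by omega : m + 1 < j + 1)) ?_).symm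
        simp

lemma summable_log_one_add {g : ℕ → ℂ} (h : Summable fun n => ‖g n‖) :
    Summable fun n => Complex.log (1 + g n) := by
  have h0 : Tendsto (fun n => ‖g n‖) atTop (𝓝 0) := h.tendsto_atTop_zero
  have hev : ∀ᶠ n in atTop, ‖Complex.log (1 + g n)‖ ≤ 3 / 2 * ‖g n‖ := by
    filter_upwards [h0.eventually_le_const (by norm_num : (0:ℝ) < 1/2)] with n hn
    exact Complex.norm_log_one_add_half_le_self hn
  exact Summable.of_norm_bounded_eventually_nat (h.mul_left (3/2)) hev

lemma multipliable_one_add {g : ℕ → ℂ} (h : Summable fun n => ‖g n‖)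
    (hne : ∀ n, 1 + g n ≠ 0) : Multipliable fun n => 1 + g n := by
  exact Complex.multipliable_of_summable_log (f := fun n => 1 + g n) (summable_log_one_add h)

lemma tprod_one_add_eq {g : ℕ → ℂ} (h : Summable fun n => ‖g n‖)
    (hne : ∀ n, 1 + g n ≠ 0) :
    ∏' n, (1 + g n) = Complex.exp (∑' n, Complex.log (1 + g n)) := by
  have := Complex.cexp_tsum_eq_tprod (f := fun n => 1 + g n) hne (summable_log_one_add h)
  exact this.symm

lemma tprod_one_add_ne_zero {g : ℕ → ℂ} (h : Summable fun n => ‖g n‖)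
    (hne : ∀ n, 1 + g n ≠ 0) : ∏' n, (1 + g n) ≠ 0 := by
  rw [tprod_one_add_eq h hne]; exact Complex.exp_ne_zero _

lemma tendsto_prod_one_add {g : ℕ → ℂ} (h : Summable fun n => ‖g n‖)
    (hne : ∀ n, 1 + g n ≠ 0) :
    Tendsto (fun N => ∏ n ∈ range N, (1 + g n)) atTop (𝓝 (∏' n, (1 + g n))) :=
  (multipliable_one_add h hne).hasProd.tendsto_prod_nat

/-- `‖∏ (1 + f i) - 1‖ ≤ ∏ (1 + ‖f i‖) - 1`. -/
lemma norm_prod_one_add_sub_one_le {ι : Type*} (s : Finset ι) (f : ι → ℂ) :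
    ‖∏ i ∈ s, (1 + f i) - 1‖ ≤ (∏ i ∈ s, (1 + ‖f i‖)) - 1 := by
  classical
  induction s using Finset.cons_induction with
  | empty => simp
  | cons a s ha ih =>
    rw [Finset.prod_cons, Finset.prod_cons]
    have key : (1 + f a) * ∏ i ∈ s, (1 + f i) - 1
        = (∏ i ∈ s, (1 + f i) - 1) * (1 + f a) + f a := by ring
    rw [key]
    have h1 : ‖(∏ i ∈ s, (1 + f i) - 1) * (1 + f a) + f a‖
        ≤ ((∏ i ∈ s, (1 + ‖f i‖)) - 1) * (1 + ‖f a‖) + ‖f a‖ := by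
      refine le_trans (norm_add_le _ _) (add_le_add ?_ le_rfl)
      rw [norm_mul]
      refine mul_le_mul ih (le_trans (norm_add_le _ _) (by norm_num)) (norm_nonneg _) ?_
      have : (1:ℝ) ≤ ∏ i ∈ s, (1 + ‖f i‖) := by
        have h2 := Finset.prod_le_prod (s := s) (f := fun _ => (1:ℝ))
          (g := fun i => 1 + ‖f i‖) (fun i _ => zero_le_one)
          (fun i _ => le_add_of_nonneg_right (norm_nonneg _))
        simpa using h2
      linarith
    refine le_trans h1 (le_of_eq ?_)
    ring

lemma prod_one_add_le_exp {ι : Type*} (s : Finset ι) (f : ι → ℝ) (hf : ∀ i ∈ s, 0 ≤ f i) :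
    ∏ i ∈ s, (1 + f i) ≤ Real.exp (∑ i ∈ s, f i) := by
  rw [Real.exp_sum]
  refine Finset.prod_le_prod (fun i hi => by have := hf i hi; positivity) fun i hi => ?_
  have := Real.add_one_le_exp (f i)
  linarith

section Ebounds
variable {Q : ℂ} (hQ : ‖Q‖ < 1)

lemma one_sub_pow_ne_zero (hQ : ‖Q‖ < 1) (i : ℕ) : 1 - Q ^ (i + 1) ≠ 0 := by
  intro h
  have h2 : Q ^ (i + 1) = 1 := by linear_combination -h
  have := congrArg (‖·‖) h2
  simp only [norm_pow, norm_one] at this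
  have hlt : ‖Q‖ ^ (i + 1) < 1 :=
    pow_lt_one₀ (norm_nonneg Q) hQ (Nat.succ_ne_zero i)
  rw [this] at hlt
  exact lt_irrefl _ hlt

lemma summable_normQ (hQ : ‖Q‖ < 1) (c : ℝ) :
    Summable fun n : ℕ => ‖Q‖ ^ (n + 1) * c := by
  apply Summable.mul_right
  exact (summable_geometric_of_lt_one (norm_nonneg Q) hQ).comp_injective
    (add_left_injective 1)

/-- partial products of `∏ (1 - Q^{i+1})` -/
noncomputable def Dfin (Q : ℂ) (s : ℕ) : ℂ := ∏ i ∈ range s, (1 - Q ^ (i + 1))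

/-- the full product -/
noncomputable def Eprod (Q : ℂ) : ℂ := ∏' n : ℕ, (1 - Q ^ (n + 1))

lemma Dfin_ne_zero (hQ : ‖Q‖ < 1) (s : ℕ) : Dfin Q s ≠ 0 :=
  Finset.prod_ne_zero_iff.2 fun i _ => one_sub_pow_ne_zero hQ i

lemma summable_norm_negQ (hQ : ‖Q‖ < 1) : Summable fun n : ℕ => ‖-(Q ^ (n + 1))‖ := by
  simpa using (summable_normQ hQ 1).congr fun n => by simp [norm_pow]

lemma Eprod_ne_zero (hQ : ‖Q‖ < 1) : Eprod Q ≠ 0 := by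
  have := tprod_one_add_ne_zero (summable_norm_negQ hQ)
    (fun n => by simpa [sub_eq_add_neg] using one_sub_pow_ne_zero hQ n)
  simpa [Eprod, sub_eq_add_neg] using this

lemma tendsto_Dfin (hQ : ‖Q‖ < 1) : Tendsto (Dfin Q) atTop (𝓝 (Eprod Q)) := by
  have hm := multipliable_one_add (summable_norm_negQ hQ)
    (fun n => by simpa [sub_eq_add_neg] using one_sub_pow_ne_zero hQ n)
  have := hm.hasProd.tendsto_prod_nat
  unfold Dfin
  simpa [Eprod, sub_eq_add_neg] using this

/-- A uniform positive lower bound for all partial products. -/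
lemma exists_Dfin_lower (hQ : ‖Q‖ < 1) : ∃ δ : ℝ, 0 < δ ∧ ∀ s, δ ≤ ‖Dfin Q s‖ := by
  have hE := Eprod_ne_zero hQ
  have hEpos : 0 < ‖Eprod Q‖ := norm_pos_iff.2 hE
  have hE2 : 0 < ‖Eprod Q‖ / 2 := by linarith
  have hev : ∀ᶠ s in atTop, ‖Eprod Q‖ / 2 ≤ ‖Dfin Q s‖ := by
    have hnorm : Tendsto (fun s => ‖Dfin Q s‖) atTop (𝓝 ‖Eprod Q‖) :=
      (tendsto_Dfin hQ).norm
    exact hnorm.eventually_const_le (by linarith)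
  obtain ⟨N, hN⟩ := eventually_atTop.1 hev
  set m := ((range (N + 1)).image fun s => ‖Dfin Q s‖).min' (by simp) with hm
  have hmpos : 0 < m := by
    have hmem := ((range (N + 1)).image fun s => ‖Dfin Q s‖).min'_mem (by simp)
    rw [← hm] at hmem
    obtain ⟨s, _, hs⟩ := Finset.mem_image.1 hmem
    rw [← hs]
    exact norm_pos_iff.2 (Dfin_ne_zero hQ s)
  refine ⟨min (‖Eprod Q‖ / 2) m, lt_min hE2 hmpos, fun s => ?_⟩
  rcases le_or_gt s N with hsN | hsN
  · refine le_trans (min_le_right _ _) ?_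
    apply Finset.min'_le
    exact Finset.mem_image.2 ⟨s, by simp [Finset.mem_range]; omega, rfl⟩
  · exact le_trans (min_le_left _ _) (hN s (le_of_lt hsN))

/-- Sum of a geometric block. -/
lemma sum_pow_block (hQ : ‖Q‖ < 1) {s m : ℕ} (hsm : s ≤ m) :
    ∑ i ∈ range s, ‖Q‖ ^ (m - i) ≤ ‖Q‖ ^ (m - s + 1) * (1 - ‖Q‖)⁻¹ := by
  have h0 : (0:ℝ) ≤ ‖Q‖ := norm_nonneg Q
  have hrefl : ∑ i ∈ range s, ‖Q‖ ^ (m - i)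
      = ∑ i ∈ range s, ‖Q‖ ^ (m - s + 1 + i) := by
    rw [← Finset.sum_range_reflect (fun i => ‖Q‖ ^ (m - i)) s]
    refine Finset.sum_congr rfl fun i hi => ?_
    have hi' : i < s := Finset.mem_range.1 hi
    congr 1
    omega
  rw [hrefl]
  have : ∑ i ∈ range s, ‖Q‖ ^ (m - s + 1 + i)
      = ‖Q‖ ^ (m - s + 1) * ∑ i ∈ range s, ‖Q‖ ^ i := by
    rw [Finset.mul_sum]
    exact Finset.sum_congr rfl fun i _ => by rw [pow_add]
  rw [this]
  refine mul_le_mul_of_nonneg_left ?_ (by positivity)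
  have hsle : ∑ i ∈ range s, ‖Q‖ ^ i ≤ ∑' i : ℕ, ‖Q‖ ^ i :=
    Summable.sum_le_tsum _ (fun i _ => by positivity)
      (summable_geometric_of_lt_one h0 hQ)
  rw [tsum_geometric_of_lt_one h0 hQ] at hsle
  exact hsle

/-- numerator partial products -/
noncomputable def Nfin (Q : ℂ) (m s : ℕ) : ℂ := ∏ i ∈ range s, (1 - Q ^ (m - i))

lemma Nfin_norm_le (hQ : ‖Q‖ < 1) {m s : ℕ} (hsm : s ≤ m) :
    ‖Nfin Q m s‖ ≤ Real.exp (‖Q‖ * (1 - ‖Q‖)⁻¹) := by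
  have h1 : ‖Nfin Q m s‖ ≤ ∏ i ∈ range s, (1 + ‖Q‖ ^ (m - i)) := by
    rw [Nfin]
    refine le_trans (norm_prod_le _ _) (Finset.prod_le_prod
      (fun i _ => norm_nonneg _) fun i _ => ?_)
    refine le_trans (norm_sub_le _ _) ?_
    simp [norm_pow]
  refine le_trans h1 (le_trans (prod_one_add_le_exp _ _ fun i _ => by positivity) ?_)
  apply Real.exp_le_exp.2
  refine le_trans (sum_pow_block hQ hsm) ?_
  refine mul_le_mul_of_nonneg_right ?_ (inv_nonneg.2 (by linarith))
  exact pow_le_of_le_one (norm_nonneg Q) hQ.le (by omega)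

lemma Nfin_sub_one_norm_le (hQ : ‖Q‖ < 1) {m s : ℕ} (hsm : s ≤ m) :
    ‖Nfin Q m s - 1‖ ≤ Real.exp (‖Q‖ ^ (m - s + 1) * (1 - ‖Q‖)⁻¹) - 1 := by
  have h1 : ‖Nfin Q m s - 1‖ ≤ (∏ i ∈ range s, (1 + ‖Q‖ ^ (m - i))) - 1 := by
    have := norm_prod_one_add_sub_one_le (range s) (fun i => -(Q ^ (m - i)))
    simp only [← sub_eq_add_neg, norm_neg, norm_pow] at this
    exact this
  refine le_trans h1 ?_
  have h2 := prod_one_add_le_exp (range s) (fun i => ‖Q‖ ^ (m - i)) fun i _ => by positivity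
  have h3 := Real.exp_le_exp.2 (sum_pow_block hQ hsm)
  linarith

/-- uniform bound for Gaussian binomials -/
lemma gb_norm_le (hQ : ‖Q‖ < 1) {δ : ℝ} (hδ : 0 < δ) (hδD : ∀ s, δ ≤ ‖Dfin Q s‖)
    {m j : ℕ} (hjm : j ≤ m) :
    ‖gb Q m j‖ ≤ Real.exp (‖Q‖ * (1 - ‖Q‖)⁻¹) / δ := by
  have hkey : gb Q m j * Dfin Q j = Nfin Q m j := gb_mul_eq Q m j
  have hD := Dfin_ne_zero hQ j
  have : ‖gb Q m j‖ * ‖Dfin Q j‖ = ‖Nfin Q m j‖ := by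
    rw [← norm_mul, hkey]
  have hN := Nfin_norm_le hQ hjm
  rw [← this] at hN
  rw [le_div_iff₀ hδ]
  have hδj := hδD j
  have hg0 := norm_nonneg (gb Q m j)
  nlinarith

/-- The limit of the Gaussian binomials. -/
lemma gb_tendsto (hQ : ‖Q‖ < 1) (k : ℤ) :
    Tendsto (fun n : ℕ => gb Q (2 * n) ((n + k).toNat)) atTop (𝓝 (Eprod Q)⁻¹) := by
  have hD := fun s => Dfin_ne_zero hQ s
  have heq : ∀ n : ℕ, gb Q (2 * n) ((n + k).toNat)
      = Nfin Q (2 * n) ((n + k).toNat) * (Dfin Q ((n + k).toNat))⁻¹ := by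
    intro n
    have h := gb_mul_eq Q (2 * n) ((n + k).toNat)
    have h2 : gb Q (2 * n) ((n + k).toNat) * Dfin Q ((n + k).toNat)
        = Nfin Q (2 * n) ((n + k).toNat) := h
    rw [eq_mul_inv_iff_mul_eq₀ (hD _)]
    exact h2
  rw [show (Eprod Q)⁻¹ = 1 * (Eprod Q)⁻¹ by ring]
  refine Tendsto.congr (fun n => (heq n).symm) (Tendsto.mul ?_ (Tendsto.inv₀ ?_ (Eprod_ne_zero hQ)))
  · -- numerator → 1
    rw [tendsto_iff_norm_sub_tendsto_zero]
    have hb : ∀ᶠ n : ℕ in atTop, ‖Nfin Q (2 * n) ((n + k).toNat) - 1‖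
        ≤ Real.exp (‖Q‖ ^ (n - k.natAbs + 1) * (1 - ‖Q‖)⁻¹) - 1 := by
      filter_upwards [eventually_ge_atTop k.natAbs] with n hn
      have hs2 : (n + k).toNat ≤ 2 * n := by omega
      refine le_trans (Nfin_sub_one_norm_le hQ hs2) ?_
      have : ‖Q‖ ^ (2 * n - (n + k).toNat + 1) ≤ ‖Q‖ ^ (n - k.natAbs + 1) := by
        apply pow_le_pow_of_le_one (norm_nonneg Q) hQ.le
        omega
      have h2 := Real.exp_le_exp.2 (mul_le_mul_of_nonneg_right this
        (inv_nonneg.2 (by linarith : (0:ℝ) ≤ 1 - ‖Q‖)))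
      linarith
    have hzero : Tendsto (fun n : ℕ => Real.exp (‖Q‖ ^ (n - k.natAbs + 1) * (1 - ‖Q‖)⁻¹) - 1)
        atTop (𝓝 0) := by
      have h1 : Tendsto (fun n : ℕ => n - k.natAbs + 1) atTop atTop := by
        apply tendsto_atTop.2
        intro b
        filter_upwards [eventually_ge_atTop (b + k.natAbs)] with n hn
        omega
      have h2 : Tendsto (fun n : ℕ => ‖Q‖ ^ (n - k.natAbs + 1)) atTop (𝓝 0) :=
        (tendsto_pow_atTop_nhds_zero_of_lt_one (norm_nonneg Q) hQ).comp h1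
      have h3 : Tendsto (fun n : ℕ => Real.exp (‖Q‖ ^ (n - k.natAbs + 1) * (1 - ‖Q‖)⁻¹))
          atTop (𝓝 1) := by
        have := (h2.mul_const ((1 - ‖Q‖)⁻¹)).rexp
        simpa using this
      simpa using h3.sub_const 1
    exact squeeze_zero' (by filter_upwards with n using norm_nonneg _) hb hzero
  · -- denominator → Eprod
    refine (tendsto_Dfin hQ).comp (tendsto_atTop.2 fun b => ?_)
    filter_upwards [eventually_ge_atTop (b + k.natAbs)] with n hn
    omega

end Ebounds

lemma two_mul_choose_two : ∀ j : ℕ, 2 * j.choose 2 = j * (j - 1) := by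
  intro j
  induction j with
  | zero => rfl
  | succ j ih =>
    rw [Nat.choose_succ_succ, Nat.choose_one_right, Nat.mul_add, ih, Nat.succ_sub_one]
    cases j with
    | zero => rfl
    | succ i => simp only [Nat.succ_sub_one]; ring

lemma sum_odd (n : ℕ) : ∑ j ∈ range n, (2 * (j : ℤ) + 1) = (n : ℤ) ^ 2 := by
  induction n with
  | zero => simp
  | succ n ih => rw [Finset.sum_range_succ, ih]; push_cast; ring

lemma zpow_sum₀ {x : ℂ} (hx : x ≠ 0) (s : Finset ℕ) (f : ℕ → ℤ) :
    x ^ (∑ i ∈ s, f i) = ∏ i ∈ s, x ^ f i := by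
  classical
  induction s using Finset.cons_induction with
  | empty => simp
  | cons a s ha ih => rw [Finset.sum_cons, Finset.prod_cons, zpow_add₀ hx, ih]

theorem jtp_fin {q y : ℂ} (hq : q ≠ 0) (hy : y ≠ 0) (n : ℕ) :
    ∏ j ∈ range n, ((1 + q ^ (2 * j + 1) * y) * (1 + q ^ (2 * j + 1) * y⁻¹))
      = ∑ j ∈ range (2 * n + 1),
          gb (q ^ 2) (2 * n) j * q ^ (((j : ℤ) - n) ^ 2) * y ^ ((j : ℤ) - n) := by
  have hq2 : (q : ℂ) ^ 2 ≠ 0 := pow_ne_zero 2 hq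
  have hq2z : ∀ t : ℤ, ((q ^ 2) ^ t) = q ^ (2 * t) := by
    intro t; rw [← zpow_natCast q 2, ← zpow_mul]; norm_num
  have h := qbinom (q ^ 2) (2 * n) (q * (q ^ 2) ^ (-(n : ℤ)) * y)
  -- Left side of h
  set f : ℕ → ℂ := fun k => 1 + q ^ (2 * (k : ℤ) - 2 * n + 1) * y with hf
  have hfac : ∀ k : ℕ, 1 + (q * (q ^ 2) ^ (-(n : ℤ)) * y) * (q ^ 2) ^ k = f k := by
    intro k
    simp only [hf]
    congr 1
    rw [hq2z, ← zpow_natCast (q ^ 2) k, hq2z]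
    rw [show (q : ℂ) * q ^ (2 * -(n : ℤ)) * y * q ^ (2 * (k : ℤ))
        = (q ^ (2 * -(n : ℤ)) * q ^ (2 * (k : ℤ)) * q) * y by ring]
    rw [← zpow_add₀ hq, ← zpow_add_one₀ hq]
    congr 2
    ring
  rw [Finset.prod_congr rfl (fun k _ => hfac k)] at h
  -- split the product
  have hsplit : ∏ k ∈ range (2 * n), f k
      = (∏ k ∈ range n, f k) * ∏ k ∈ range n, f (n + k) := by
    rw [two_mul, Finset.prod_range_add]
  have hsecond : ∀ k : ℕ, f (n + k) = 1 + q ^ (2 * k + 1) * y := by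
    intro k
    simp only [hf]
    congr 2
    rw [← zpow_natCast q (2 * k + 1)]
    congr 1
    push_cast; ring
  have hfirst : ∏ k ∈ range n, f k
      = (q ^ (-((n : ℤ) ^ 2)) * y ^ n) * ∏ j ∈ range n, (1 + q ^ (2 * j + 1) * y⁻¹) := by
    rw [← Finset.prod_range_reflect f n]
    have hterm : ∀ j ∈ range n, f (n - 1 - j)
        = (q ^ (-(2 * (j : ℤ) + 1)) * y) * (1 + q ^ (2 * j + 1) * y⁻¹) := by
      intro j hj
      have hjn : j < n := Finset.mem_range.1 hj
      simp only [hf]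
      have hexp : 2 * ((n - 1 - j : ℕ) : ℤ) - 2 * n + 1 = -(2 * (j : ℤ) + 1) := by
        have : ((n - 1 - j : ℕ) : ℤ) = (n : ℤ) - 1 - j := by push_cast [Nat.cast_sub]; omega
        rw [this]; ring
      rw [hexp, zpow_neg, ← zpow_natCast q (2 * j + 1)]
      have : ((2 * j + 1 : ℕ) : ℤ) = 2 * (j : ℤ) + 1 := by push_cast; ring
      rw [this]
      have hqe : (q : ℂ) ^ (2 * (j : ℤ) + 1) ≠ 0 := zpow_ne_zero _ hq
      field_simp
      ring
    rw [Finset.prod_congr rfl hterm, Finset.prod_mul_distrib, Finset.prod_mul_distrib,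
      Finset.prod_const, ← zpow_sum₀ hq]
    have hneg : (∑ i ∈ range n, -(2 * (i : ℤ) + 1)) = -((n : ℤ) ^ 2) := by
      rw [← sum_odd n, ← Finset.sum_neg_distrib]
    rw [hneg, Finset.card_range]
  -- combine left side
  have hL : ∏ k ∈ range (2 * n), f k
      = (q ^ (-((n : ℤ) ^ 2)) * y ^ n) *
        ∏ j ∈ range n, ((1 + q ^ (2 * j + 1) * y) * (1 + q ^ (2 * j + 1) * y⁻¹)) := by
    rw [hsplit, Finset.prod_congr rfl (fun k _ => hsecond k), hfirst,
      Finset.prod_mul_distrib]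
    ring
  rw [hL] at h
  -- Right side of h : per-term
  have hR : ∀ j ∈ range (2 * n + 1),
      gb (q ^ 2) (2 * n) j * (q ^ 2) ^ j.choose 2 * (q * (q ^ 2) ^ (-(n : ℤ)) * y) ^ j
      = (q ^ (-((n : ℤ) ^ 2)) * y ^ n) *
          (gb (q ^ 2) (2 * n) j * q ^ (((j : ℤ) - n) ^ 2) * y ^ ((j : ℤ) - n)) := by
    intro j _
    rw [mul_pow, mul_pow, hq2z, ← zpow_natCast (q ^ 2) (j.choose 2), hq2z,
      ← zpow_natCast q j, ← zpow_natCast (q ^ (2 * -(n : ℤ))) j, ← zpow_mul,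
      ← zpow_natCast y j, ← zpow_natCast y n]
    have hc0 : (j.choose 2 : ℤ) * 2 = (j : ℤ) * ((j : ℤ) - 1) := by
      have h2 := two_mul_choose_two j
      rcases Nat.eq_zero_or_pos j with rfl | hj
      · simp
      · have hcast : ((j * (j - 1) : ℕ) : ℤ) = (j : ℤ) * ((j : ℤ) - 1) := by
          push_cast [Nat.cast_sub hj]; ring
        rw [← hcast, ← h2]; push_cast; ring
    have key : (q : ℂ) ^ (2 * ((j.choose 2 : ℕ) : ℤ)) * (q ^ ((j : ℕ) : ℤ) * q ^ (2 * -(n : ℤ) * ((j : ℕ) : ℤ)))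
        = q ^ (-((n : ℤ) ^ 2)) * q ^ (((j : ℤ) - n) ^ 2) := by
      rw [← zpow_add₀ hq, ← zpow_add₀ hq, ← zpow_add₀ hq]
      congr 1
      linear_combination hc0
    have keyy : (y : ℂ) ^ ((j : ℕ) : ℤ) = y ^ ((n : ℕ) : ℤ) * y ^ ((j : ℤ) - n) := by
      rw [← zpow_add₀ hy]; congr 1; ring
    rw [show gb (q ^ 2) (2 * n) j * q ^ (2 * ((j.choose 2 : ℕ) : ℤ)) *
          (q ^ ((j : ℕ) : ℤ) * q ^ (2 * -(n : ℤ) * ((j : ℕ) : ℤ)) * y ^ ((j : ℕ) : ℤ))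
        = gb (q ^ 2) (2 * n) j *
            (q ^ (2 * ((j.choose 2 : ℕ) : ℤ)) * (q ^ ((j : ℕ) : ℤ) * q ^ (2 * -(n : ℤ) * ((j : ℕ) : ℤ))))
            * y ^ ((j : ℕ) : ℤ) by ring]
    rw [key, keyy]
    ring
  rw [Finset.sum_congr rfl hR, ← Finset.mul_sum] at h
  have hC : (q ^ (-((n : ℤ) ^ 2)) * y ^ n) ≠ 0 :=
    mul_ne_zero (zpow_ne_zero _ hq) (pow_ne_zero _ hy)
  exact mul_left_cancel₀ hC h

theorem deriv_identity {q : ℂ} (hq : q ≠ 0) (n : ℕ) :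
    (∏ j ∈ range (n + 1), (1 - (q ^ 2) ^ (j + 1))) * (∏ j ∈ range n, (1 - (q ^ 2) ^ (j + 1)))
      = ∑ j ∈ range (2 * (n + 1) + 1),
          gb (q ^ 2) (2 * (n + 1)) j * q ^ (((j : ℤ) - (n + 1)) ^ 2) *
            ((-q) ^ ((j : ℤ) - (n + 1)) * (((j : ℤ) - (n + 1) : ℤ) : ℂ)) := by
  set N := n + 1 with hN
  set L : ℂ → ℂ := fun w =>
    ∏ j ∈ range N, ((1 + q ^ (2 * j + 1) * (-(q * w))) * (1 + q ^ (2 * j + 1) * (-(q * w))⁻¹))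
    with hL
  set Rg : ℂ → ℂ := fun w => ∑ j ∈ range (2 * N + 1),
      gb (q ^ 2) (2 * N) j * q ^ (((j : ℤ) - N) ^ 2) *
        ((-q) ^ ((j : ℤ) - N) * w ^ ((j : ℤ) - N)) with hRg
  -- L = Rg away from 0
  have heq : ∀ w : ℂ, w ≠ 0 → L w = Rg w := by
    intro w hw
    have hy : -(q * w) ≠ 0 := neg_ne_zero.2 (mul_ne_zero hq hw)
    rw [hL, hRg]
    simp only
    rw [jtp_fin hq hy N]
    refine Finset.sum_congr rfl fun j _ => ?_
    rw [show -(q * w) = (-q) * w by ring, mul_zpow]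
    try ring
  have hne : {w : ℂ | w ≠ 0} ∈ 𝓝 (1:ℂ) := isOpen_ne.mem_nhds one_ne_zero
  have hev : L =ᶠ[𝓝 1] Rg := eventually_of_mem hne fun w hw => heq w hw
  -- good form of L near 1
  set A : ℂ → ℂ := fun w =>
    (∏ j ∈ range N, (1 - (q ^ 2) ^ (j + 1) * w)) * ∏ j ∈ range n, (1 - (q ^ 2) ^ (j + 1) * w⁻¹)
    with hA
  have hgood : ∀ w : ℂ, w ≠ 0 → L w = (1 - w⁻¹) * A w := by
    intro w hw
    rw [hL, hA]
    simp only
    rw [Finset.prod_mul_distrib]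
    have h1 : ∀ j, 1 + q ^ (2 * j + 1) * (-(q * w)) = 1 - (q ^ 2) ^ (j + 1) * w := by
      intro j
      have hpow : (q ^ 2) ^ (j + 1) = q ^ (2 * j + 1) * q := by
        rw [← pow_mul, ← pow_succ]
        try (congr 1)
        all_goals omega
      linear_combination w * hpow
    have h2 : ∀ j, 1 + q ^ (2 * j + 1) * (-(q * w))⁻¹ = 1 - (q ^ 2) ^ j * w⁻¹ := by
      intro j
      have hpow : q ^ (2 * j + 1) = (q ^ 2) ^ j * q := by
        rw [← pow_mul, ← pow_succ]
      field_simp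
      linear_combination (-w) * hpow
    rw [Finset.prod_congr rfl fun j _ => h1 j, Finset.prod_congr rfl fun j _ => h2 j]
    rw [Finset.prod_range_succ' (fun j => 1 - (q ^ 2) ^ j * w⁻¹) n]
    simp only [pow_zero, one_mul]
    ring
  have hev2 : L =ᶠ[𝓝 1] fun w => (1 - w⁻¹) * A w :=
    eventually_of_mem hne fun w hw => hgood w hw
  -- derivative of the left side
  have hAdiff : DifferentiableAt ℂ A 1 := by
    apply DifferentiableAt.mul
    · apply DifferentiableAt.fun_finsetProd
      intro j _
      exact (differentiableAt_const _).sub ((differentiableAt_const _).mul differentiableAt_id)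
    · apply DifferentiableAt.fun_finsetProd
      intro j _
      exact (differentiableAt_const _).sub
        ((differentiableAt_const _).mul (differentiableAt_inv one_ne_zero))
  have hfac : HasDerivAt (fun w : ℂ => 1 - w⁻¹) 1 1 := by
    have := (hasDerivAt_inv (one_ne_zero : (1:ℂ) ≠ 0)).const_sub 1
    simpa using this
  have hLd : HasDerivAt L (A 1) 1 := by
    have h := hfac.mul hAdiff.hasDerivAt
    simp only [inv_one, sub_self, zero_mul, add_zero, one_mul] at h
    exact h.congr_of_eventuallyEq hev2
  -- derivative of the right side
  have hRd : HasDerivAt Rg (∑ j ∈ range (2 * N + 1),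
      gb (q ^ 2) (2 * N) j * q ^ (((j : ℤ) - N) ^ 2) *
        ((-q) ^ ((j : ℤ) - N) * (((j : ℤ) - N : ℤ) : ℂ))) 1 := by
    rw [hRg]
    apply HasDerivAt.fun_sum
    intro j _
    have hz := hasDerivAt_zpow ((j : ℤ) - N) (1 : ℂ) (Or.inl one_ne_zero)
    have := ((hz.const_mul ((-q) ^ ((j : ℤ) - N))).const_mul
      (gb (q ^ 2) (2 * N) j * q ^ (((j : ℤ) - N) ^ 2)))
    simpa [one_zpow, mul_assoc] using this
  -- combine
  have huniq : A 1 = ∑ j ∈ range (2 * N + 1),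
      gb (q ^ 2) (2 * N) j * q ^ (((j : ℤ) - N) ^ 2) *
        ((-q) ^ ((j : ℤ) - N) * (((j : ℤ) - N : ℤ) : ℂ)) := by
    have hRd' : HasDerivAt L _ 1 := hRd.congr_of_eventuallyEq hev
    exact hLd.unique hRd'
  have hA1 : A 1 = (∏ j ∈ range N, (1 - (q ^ 2) ^ (j + 1)))
      * ∏ j ∈ range n, (1 - (q ^ 2) ^ (j + 1)) := by
    rw [hA]; simp
  rw [← hA1, huniq]
  refine Finset.sum_congr rfl fun j _ => ?_
  rw [hN]
  push_cast
  ring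

lemma rexp_zpow (x : ℝ) (m : ℤ) : (Real.exp x) ^ m = Real.exp (x * m) := by
  induction m using Int.induction_on with
  | zero => simp
  | succ i ih =>
    rw [zpow_add₀ (Real.exp_ne_zero x), ih, zpow_one, ← Real.exp_add]
    congr 1; push_cast; ring
  | pred i ih =>
    rw [zpow_sub₀ (Real.exp_ne_zero x), ih, zpow_one, ← Real.exp_sub]
    congr 1; push_cast; ring

section Main
variable {t : ℝ} {q : ℂ}

theorem sumT (ht : 0 < t) (hqt : ‖q‖ = Real.exp (-π * t)) (hq0 : q ≠ 0) :
    ∑' k : ℤ, q ^ (k ^ 2) * ((-q) ^ k * (k : ℂ)) = (Eprod (q ^ 2)) ^ 3 := by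
  have hq1 : ‖q‖ < 1 := by
    rw [hqt, Real.exp_lt_one_iff]
    nlinarith [Real.pi_pos]
  have hq0' : 0 ≤ ‖q‖ := norm_nonneg q
  have hQ1 : ‖q ^ 2‖ < 1 := by
    rw [norm_pow]
    nlinarith
  set Q : ℂ := q ^ 2 with hQdef
  set E : ℂ := Eprod Q with hEdef
  have hE := Eprod_ne_zero hQ1
  obtain ⟨δ, hδ, hδD⟩ := exists_Dfin_lower hQ1
  set B : ℝ := Real.exp (‖Q‖ * (1 - ‖Q‖)⁻¹) / δ with hB
  have hBpos : 0 < B := by positivity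
  set T : ℤ → ℂ := fun k => q ^ (k ^ 2) * ((-q) ^ k * (k : ℂ)) with hT
  set F : ℕ → ℤ → ℂ := fun n k =>
    if k.natAbs ≤ n + 1 then
      gb Q (2 * (n + 1)) (((n : ℤ) + 1 + k).toNat) * (q ^ (k ^ 2) * ((-q) ^ k * (k : ℂ)))
    else 0 with hF
  -- step 1 : identity
  have hiden : ∀ n : ℕ, Dfin Q (n + 1) * Dfin Q n = ∑' k : ℤ, F n k := by
    intro n
    rw [tsum_eq_sum (s := Finset.Icc (-(n + 1 : ℤ)) (n + 1))
      (fun k hk => by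
        rw [hF]
        simp only
        rw [if_neg]
        intro hcon
        apply hk
        rw [Finset.mem_Icc]
        omega)]
    have hid := deriv_identity hq0 n
    rw [Dfin, Dfin, hid]
    have hbij : ∑ k ∈ Finset.Icc (-(n + 1 : ℤ)) (n + 1), F n k
        = ∑ j ∈ range (2 * (n + 1) + 1),
            gb (q ^ 2) (2 * (n + 1)) j * q ^ (((j : ℤ) - (n + 1)) ^ 2) *
              ((-q) ^ ((j : ℤ) - (n + 1)) * (((j : ℤ) - (n + 1) : ℤ) : ℂ)) := by
      refine Finset.sum_nbij' (i := fun k : ℤ => ((n : ℤ) + 1 + k).toNat)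
        (j := fun j : ℕ => (j : ℤ) - ((n : ℤ) + 1)) ?_ ?_ ?_ ?_ ?_
      · intro k hk
        simp only [Finset.mem_Icc] at hk
        simp only [Finset.mem_range]
        omega
      · intro j hj
        simp only [Finset.mem_range] at hj
        simp only [Finset.mem_Icc]
        omega
      · intro k hk
        simp only [Finset.mem_Icc] at hk
        omega
      · intro j hj
        simp only [Finset.mem_range] at hj
        omega
      · intro k hk
        rw [Finset.mem_Icc] at hk
        rw [hF]
        simp only
        rw [if_pos (by omega)]
        have hcast : ((((n : ℤ) + 1 + k).toNat : ℕ) : ℤ) = (n : ℤ) + 1 + k := by omega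
        rw [hcast, show (n : ℤ) + 1 + k - ((n : ℤ) + 1) = k from by ring]
        ring
    rw [← hbij]
  -- step 2 : left limit
  have hlim1 : Tendsto (fun n => Dfin Q (n + 1) * Dfin Q n) atTop (𝓝 (E * E)) :=
    Tendsto.mul ((tendsto_Dfin hQ1).comp (tendsto_add_atTop_nat 1)) (tendsto_Dfin hQ1)
  -- step 3 : Tannery
  have hnq : ‖-q‖ = ‖q‖ := norm_neg q
  have hns : ∀ (m : ℤ), ‖q‖ ^ m = Real.exp (-π * t * m) := by
    intro m
    rw [hqt, rexp_zpow]
  have hbound : ∀ n k, ‖F n k‖ ≤ B * |k| * Real.exp (-π * (t * (k:ℝ) ^ 2 - 2 * (t / 2) * |k|)) := by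
    intro n k
    rw [hF]
    simp only
    by_cases hk : k.natAbs ≤ n + 1
    · rw [if_pos hk]
      rw [norm_mul, norm_mul, norm_mul, norm_zpow, norm_zpow, hnq]
      have hgb : ‖gb Q (2 * (n + 1)) (((n : ℤ) + 1 + k).toNat)‖ ≤ B :=
        gb_norm_le hQ1 hδ hδD (by omega)
      have hcast : ‖((k : ℤ) : ℂ)‖ = ((|k| : ℤ) : ℝ) := by
        rw [Int.cast_abs]
        simp
      rw [hcast]
      have hexp : Real.exp (-π * t * ((k:ℝ) ^ 2)) * Real.exp (-π * t * k)
          ≤ Real.exp (-π * (t * (k:ℝ) ^ 2 - 2 * (t / 2) * |k|)) := by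
        rw [← Real.exp_add, Real.exp_le_exp]
        have h1 : -((k:ℝ)) ≤ |(k:ℝ)| := neg_le_abs _
        have habs : |(k:ℝ)| = ((|k| : ℤ) : ℝ) := by push_cast; rfl
        have hπt : (0:ℝ) < π * t := mul_pos Real.pi_pos ht
        have h2 := mul_le_mul_of_nonneg_left h1 hπt.le
        rw [habs] at h2
        nlinarith [h2]
      calc ‖gb Q (2 * (n + 1)) (((n : ℤ) + 1 + k).toNat)‖ *
            (‖q‖ ^ ((k:ℤ) ^ 2) * (‖q‖ ^ (k : ℤ) * ((|k| : ℤ) : ℝ)))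
          ≤ B * (‖q‖ ^ ((k:ℤ) ^ 2) * (‖q‖ ^ (k : ℤ) * ((|k| : ℤ) : ℝ))) := by
            refine mul_le_mul_of_nonneg_right hgb ?_
            have h1 : (0:ℝ) ≤ ‖q‖ ^ ((k:ℤ) ^ 2) := zpow_nonneg hq0' _
            have h2 : (0:ℝ) ≤ ‖q‖ ^ (k : ℤ) := zpow_nonneg hq0' _
            positivity
        _ ≤ B * ((|k| : ℤ) : ℝ) * Real.exp (-π * (t * (k:ℝ) ^ 2 - 2 * (t / 2) * ((|k| : ℤ) : ℝ))) := by
            rw [hns, hns]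
            calc B * (Real.exp (-π * t * (((k:ℤ)^2 : ℤ) : ℝ)) * (Real.exp (-π * t * (k : ℝ)) * ((|k| : ℤ) : ℝ)))
                = B * ((|k| : ℤ) : ℝ) * (Real.exp (-π * t * ((k:ℝ) ^ 2)) * Real.exp (-π * t * (k:ℝ))) := by
                  push_cast
                  ring
              _ ≤ B * ((|k| : ℤ) : ℝ) * Real.exp (-π * (t * (k:ℝ) ^ 2 - 2 * (t / 2) * ((|k| : ℤ) : ℝ))) := by
                  refine mul_le_mul_of_nonneg_left hexp ?_
                  positivity
        _ = B * |k| * Real.exp (-π * (t * (k:ℝ) ^ 2 - 2 * (t / 2) * |k|)) := by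
            norm_num
    · rw [if_neg hk, norm_zero]
      positivity
  have hsummable : Summable (fun k : ℤ => B * |k| * Real.exp (-π * (t * (k:ℝ) ^ 2 - 2 * (t / 2) * |k|))) := by
    have := (summable_pow_mul_jacobiTheta₂_term_bound (t / 2) ht 1).mul_left B
    refine this.congr fun k => ?_
    push_cast
    ring
  have hptwise : ∀ k : ℤ, Tendsto (fun n => F n k) atTop (𝓝 (E⁻¹ * T k)) := by
    intro k
    have hgbt : Tendsto (fun n : ℕ => gb Q (2 * (n + 1)) (((n + 1 : ℕ) + k).toNat))
        atTop (𝓝 E⁻¹) := (gb_tendsto hQ1 k).comp (tendsto_add_atTop_nat 1)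
    have := hgbt.mul_const (T k)
    refine Tendsto.congr' ?_ this
    filter_upwards [eventually_ge_atTop k.natAbs] with n hn
    rw [hF, hT]
    simp only
    have hc2 : (((n + 1 : ℕ) : ℤ) + k) = ((n : ℤ) + 1 + k) := by push_cast; ring
    rw [if_pos (by omega)]
    simp only [hT, hc2]
  have hlim2 : Tendsto (fun n => ∑' k : ℤ, F n k) atTop (𝓝 (∑' k : ℤ, E⁻¹ * T k)) :=
    tendsto_tsum_of_dominated_convergence hsummable hptwise
      (by filter_upwards with n using fun k => hbound n k)
  -- combine
  have hfinal : E * E = ∑' k : ℤ, E⁻¹ * T k := by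
    refine tendsto_nhds_unique ?_ hlim2
    exact hlim1.congr fun n => hiden n
  rw [tsum_mul_left] at hfinal
  have hgoal : ∑' k : ℤ, T k = E ^ 3 := by
    rw [show (E:ℂ) ^ 3 = E * (E * E) from by ring, hfinal, ← mul_assoc, mul_inv_cancel₀ hE, one_mul]
  exact hgoal
end Main

end JDF

open JDF

/-- The Dedekind eta function `η(z) = q^{1/24} ∏_{n≥1} (1 − qⁿ)` with `q = e^{2πiz}`. -/
noncomputable def dedekindEta (z : ℂ) : ℂ :=
  Complex.exp ((Real.pi : ℂ) * Complex.I * z / 12) *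
    ∏' n : ℕ, (1 - Complex.exp (2 * (Real.pi : ℂ) * Complex.I * ((n : ℂ) + 1) * z))

/-- The odd Jacobi theta derivative
`θ'_{½,½}(z) = ∑_{n ∈ ℤ+½} (−1)^{n−½} n q^{n²/2}` with `q = e^{2πiz}`. -/
noncomputable def thetaHalfHalfDeriv (z : ℂ) : ℂ :=
  ∑' k : ℤ, (-1 : ℂ) ^ k * ((k : ℂ) + 1 / 2) *
    Complex.exp ((Real.pi : ℂ) * Complex.I * z * ((k : ℂ) + 1 / 2) ^ 2)

/-- Jacobi's derivative formula: `θ'_{½,½}(z) = η(z)³` on the upper half-plane;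
in particular `θ'_{½,½}(z) ≠ 0` there. -/
theorem stmt_14 (z : ℂ) (hz : 0 < z.im) :
    thetaHalfHalfDeriv z = dedekindEta z ^ 3 ∧ thetaHalfHalfDeriv z ≠ 0 := by
  set u : ℂ := (Real.pi : ℂ) * Complex.I * z with hu
  set q : ℂ := cexp u with hqdef
  have hq0 : q ≠ 0 := Complex.exp_ne_zero u
  have hqt : ‖q‖ = rexp (-π * z.im) := by
    rw [hqdef, hu, Complex.norm_exp]
    congr 1
    simp [Complex.mul_re]
  have hq1 : ‖q‖ < 1 := by
    rw [hqt, Real.exp_lt_one_iff]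
    nlinarith [Real.pi_pos]
  have hQ1 : ‖q ^ 2‖ < 1 := by
    rw [norm_pow]
    nlinarith [norm_nonneg q]
  set E : ℂ := Eprod (q ^ 2) with hE
  have hEne : E ≠ 0 := Eprod_ne_zero hQ1
  -- identify q-powers with exponentials
  have hzpow : ∀ m : ℤ, q ^ m = cexp (m * u) := fun m => by
    rw [hqdef, ← Complex.exp_int_mul]
  -- the basic term
  set g : ℤ → ℂ := fun k => (-1 : ℂ) ^ k * cexp (u * ((k : ℂ) + 1 / 2) ^ 2) with hg
  have hgq : ∀ k : ℤ, cexp (u * ((k : ℂ) + 1 / 2) ^ 2) = cexp (u / 4) * q ^ (k ^ 2 + k) := by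
    intro k
    rw [hzpow, ← Complex.exp_add]
    congr 1
    push_cast
    ring
  -- norm of g
  have habs4 : ‖cexp (u / 4)‖ = rexp (-π * z.im / 4) := by
    rw [Complex.norm_exp, hu]
    congr 1
    simp [Complex.mul_re, Complex.div_re]
    try ring
  have hqnorm : ∀ m : ℤ, ‖q ^ m‖ = rexp (-π * z.im * m) := by
    intro m
    rw [norm_zpow, hqt, rexp_zpow]
  have hgnorm : ∀ k : ℤ, ‖g k‖ = rexp (-π * z.im / 4) * rexp (-π * z.im * ((k : ℝ) ^ 2 + k)) := by
    intro k
    rw [hg]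
    simp only
    rw [norm_mul, norm_zpow, norm_neg, norm_one, one_zpow, one_mul, hgq, norm_mul, habs4,
      hqnorm]
    congr 2
    push_cast
    ring
  -- uniform bound
  have hkey : ∀ k : ℤ, rexp (-π * z.im * ((k : ℝ) ^ 2 + k))
      ≤ rexp (-π * (z.im * (k : ℝ) ^ 2 - 2 * (z.im / 2) * ((|k| : ℤ) : ℝ))) := by
    intro k
    rw [Real.exp_le_exp]
    have h1 : -((k:ℝ)) ≤ |(k:ℝ)| := neg_le_abs _
    have habs : |(k:ℝ)| = ((|k| : ℤ) : ℝ) := by push_cast; rfl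
    have hπt : (0:ℝ) < π * z.im := mul_pos Real.pi_pos hz
    have h2 := mul_le_mul_of_nonneg_left h1 hπt.le
    rw [habs] at h2
    nlinarith [h2]
  have hS2 : Summable g := by
    apply Summable.of_norm_bounded
      (g := fun k : ℤ => rexp (-π * z.im / 4) *
        ((|k| ^ 0 : ℝ) * rexp (-π * (z.im * (k:ℝ) ^ 2 - 2 * (z.im / 2) * ((|k| : ℤ) : ℝ)))))
    · exact (summable_pow_mul_jacobiTheta₂_term_bound (z.im / 2) hz 0).mul_left _
    · intro k
      rw [hgnorm k, pow_zero, one_mul]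
      exact mul_le_mul_of_nonneg_left (hkey k) (Real.exp_nonneg _)
  have hS1 : Summable (fun k : ℤ => g k * (k : ℂ)) := by
    apply Summable.of_norm_bounded
      (g := fun k : ℤ => rexp (-π * z.im / 4) *
        ((|k| ^ 1 : ℝ) * rexp (-π * (z.im * (k:ℝ) ^ 2 - 2 * (z.im / 2) * ((|k| : ℤ) : ℝ)))))
    · exact (summable_pow_mul_jacobiTheta₂_term_bound (z.im / 2) hz 1).mul_left _
    · intro k
      rw [norm_mul, hgnorm k, pow_one]
      have hnormk : ‖((k : ℤ) : ℂ)‖ = ((|k| : ℤ) : ℝ) := by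
        rw [Int.cast_abs]; simp
      rw [hnormk]
      have := mul_le_mul_of_nonneg_left (hkey k) (Real.exp_nonneg (-π * z.im / 4))
      calc rexp (-π * z.im / 4) * rexp (-π * z.im * ((k : ℝ) ^ 2 + k)) * ((|k| : ℤ) : ℝ)
          ≤ rexp (-π * z.im / 4) *
            rexp (-π * (z.im * (k:ℝ) ^ 2 - 2 * (z.im / 2) * ((|k| : ℤ) : ℝ))) * ((|k| : ℤ) : ℝ) := by
            refine mul_le_mul_of_nonneg_right this ?_
            positivity
        _ = rexp (-π * z.im / 4) *
            (((|k| : ℤ) : ℝ) * rexp (-π * (z.im * (k:ℝ) ^ 2 - 2 * (z.im / 2) * ((|k| : ℤ) : ℝ)))) := by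
            ring
  -- the alternating sum vanishes
  have hZ : ∑' k : ℤ, g k = 0 := by
    have hneg : ∀ k : ℤ, g (-1 - k) = -(g k) := by
      intro k
      rw [hg]
      simp only
      have h2 : ((-1 : ℂ)) ^ k * ((-1 : ℂ)) ^ k = 1 := by
        rw [← mul_zpow]; norm_num
      have hmul : ((-1 : ℂ)) ^ (-1 - k) * ((-1 : ℂ)) ^ k = -1 := by
        rw [← zpow_add₀ (by norm_num : (-1 : ℂ) ≠ 0),
          show (-1 - k + k : ℤ) = -1 from by ring]
        norm_num
      have h1 : ((-1 : ℂ)) ^ (-1 - k) = -((-1 : ℂ) ^ k) := by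
        calc ((-1 : ℂ)) ^ (-1 - k)
            = ((-1 : ℂ)) ^ (-1 - k) * (((-1 : ℂ)) ^ k * ((-1 : ℂ)) ^ k) := by
              rw [h2, mul_one]
          _ = (((-1 : ℂ)) ^ (-1 - k) * ((-1 : ℂ)) ^ k) * ((-1 : ℂ)) ^ k := by ring
          _ = -((-1 : ℂ)) ^ k := by rw [hmul]; ring
      have h3 : cexp (u * (((-1 - k : ℤ) : ℂ) + 1 / 2) ^ 2)
          = cexp (u * ((k : ℂ) + 1 / 2) ^ 2) := by
        congr 1
        push_cast
        ring
      rw [h1, h3]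
      ring
    have he := (Equiv.subLeft (-1 : ℤ)).tsum_eq g
    have he2 : ∑' k : ℤ, g (-1 - k) = ∑' k : ℤ, g k := he
    rw [tsum_congr hneg, tsum_neg] at he2
    have h2 : (∑' k : ℤ, g k) + (∑' k : ℤ, g k) = 0 := by
      linear_combination -he2
    exact add_self_eq_zero.mp h2
  -- compute theta
  have htheta : thetaHalfHalfDeriv z = cexp (u / 4) * E ^ 3 := by
    rw [thetaHalfHalfDeriv]
    have hterm : ∀ k : ℤ, (-1 : ℂ) ^ k * ((k : ℂ) + 1 / 2) *
        cexp ((Real.pi : ℂ) * Complex.I * z * ((k : ℂ) + 1 / 2) ^ 2)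
        = g k * (k : ℂ) + g k * (1 / 2) := by
      intro k
      rw [hg]
      simp only [← hu]
      ring
    rw [tsum_congr hterm, Summable.tsum_add hS1 (hS2.mul_right _), tsum_mul_right, hZ, zero_mul, add_zero]
    have hTk : ∀ k : ℤ, g k * (k : ℂ) = cexp (u / 4) * (q ^ (k ^ 2) * ((-q) ^ k * (k : ℂ))) := by
      intro k
      rw [hg]
      simp only
      rw [hgq k, zpow_add₀ hq0, show -q = (-1 : ℂ) * q from by ring, mul_zpow]
      ring
    rw [tsum_congr hTk, tsum_mul_left, sumT hz hqt hq0, ← hE]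
  -- compute eta
  have hfactor : ∀ n : ℕ, cexp (2 * (Real.pi : ℂ) * Complex.I * ((n : ℂ) + 1) * z)
      = (q ^ 2) ^ (n + 1) := by
    intro n
    rw [show ((q : ℂ) ^ 2) ^ (n + 1) = q ^ (2 * (n + 1)) from by rw [pow_mul], hqdef,
      ← Complex.exp_nat_mul]
    congr 1
    rw [hu]
    push_cast
    ring
  have heta : dedekindEta z = cexp (u / 12) * E := by
    rw [dedekindEta, hE, Eprod]
    have h12 : (Real.pi : ℂ) * Complex.I * z / 12 = u / 12 := by rw [hu]
    rw [h12]
    congr 1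
    exact tprod_congr fun n => by rw [hfactor n]
  constructor
  · rw [htheta, heta, mul_pow, ← Complex.exp_nat_mul,
      show ((3 : ℕ) : ℂ) * (u / 12) = u / 4 from by push_cast; ring]
  · rw [htheta]
    exact mul_ne_zero (Complex.exp_ne_zero _) (pow_ne_zero _ hEne)
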